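/- Define ψ₀ : ℝ → ℂ² by ψ₀(x) = ( i√(k/(2β))·x·exp(−√(βk/2)·x²/2), exp(−√(βk/2)·x²/2) ). Then ψ₀ is a vacuum state for the harmonic Lévy-Leblond Hamiltonian: (bψ₀)(x) = 0 for all x ∈ ℝ, and (H_LL ψ₀)(x) = (ω/2) γ₊ ψ₀(x) for all x ∈ ℝ; that is, ψ₀ is a γ₊-eigenstate with γ₊-eigenvalue ω/2. -/

import Mathlib

open Matrix

noncomputable section

/-- The gamma matrix `γ¹ = [[1,0],[0,−1]]`. -/
def γ1 : Matrix (Fin 2) (Fin 2) ℂ := !![1, 0; 0, -1]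

/-- The gamma matrix `γ₊ = [[0,1],[0,0]]`. -/
def γp : Matrix (Fin 2) (Fin 2) ℂ := !![0, 1; 0, 0]

/-- The gamma matrix `γ₋ = [[0,0],[1,0]]`. -/
def γm : Matrix (Fin 2) (Fin 2) ℂ := !![0, 0; 1, 0]

/-- The harmonic Lévy-Leblond Hamiltonian:
`(H_LL ψ)(x) = β γ₋ ψ(x) − i γ¹ ψ′(x) + (k/2) x² γ₊ ψ(x)`. -/
def HLL (β k : ℝ) (ψ : ℝ → (Fin 2 → ℂ)) : ℝ → (Fin 2 → ℂ) :=
  fun x => (β : ℂ) • γm.mulVec (ψ x) - Complex.I • γ1.mulVec (deriv ψ x)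
    + ((k / 2 * x ^ 2 : ℝ) : ℂ) • γp.mulVec (ψ x)

/-- The lowering operator:
`(bψ)(x) = √(βk/2)·x·ψ(x) + ψ′(x) − i√(k/(2β)) γ₊ ψ(x)`. -/
def lower (β k : ℝ) (ψ : ℝ → (Fin 2 → ℂ)) : ℝ → (Fin 2 → ℂ) :=
  fun x => ((Real.sqrt (β * k / 2) * x : ℝ) : ℂ) • ψ x + deriv ψ x
    - (Complex.I * ((Real.sqrt (k / (2 * β)) : ℝ) : ℂ)) • γp.mulVec (ψ x)

/-- The raising operator:
`(b†ψ)(x) = √(βk/2)·x·ψ(x) − ψ′(x) − i√(k/(2β)) γ₊ ψ(x)`. -/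
def raise (β k : ℝ) (ψ : ℝ → (Fin 2 → ℂ)) : ℝ → (Fin 2 → ℂ) :=
  fun x => ((Real.sqrt (β * k / 2) * x : ℝ) : ℂ) • ψ x - deriv ψ x
    - (Complex.I * ((Real.sqrt (k / (2 * β)) : ℝ) : ℂ)) • γp.mulVec (ψ x)

/-- The vacuum state `ψ₀(x) = ( i√(k/(2β))·x·exp(−√(βk/2)·x²/2), exp(−√(βk/2)·x²/2) )`. -/
def vacuum (β k : ℝ) : ℝ → (Fin 2 → ℂ) :=
  fun x => ![Complex.I * ((Real.sqrt (k / (2 * β)) : ℝ) : ℂ) * (x : ℂ)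
      * Complex.exp (-(((Real.sqrt (β * k / 2) : ℝ) : ℂ)) * (x : ℂ) ^ 2 / 2),
    Complex.exp (-(((Real.sqrt (β * k / 2) : ℝ) : ℂ)) * (x : ℂ) ^ 2 / 2)]

lemma γp_mulVec (u v : ℂ) : γp.mulVec ![u, v] = ![v, 0] := by
  funext i; fin_cases i <;> simp [γp, Matrix.mulVec, dotProduct, Fin.sum_univ_two]

lemma γm_mulVec (u v : ℂ) : γm.mulVec ![u, v] = ![0, u] := by
  funext i; fin_cases i <;> simp [γm, Matrix.mulVec, dotProduct, Fin.sum_univ_two]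

lemma γ1_mulVec (u v : ℂ) : γ1.mulVec ![u, v] = ![u, -v] := by
  funext i; fin_cases i <;> simp [γ1, Matrix.mulVec, dotProduct, Fin.sum_univ_two]

lemma vacuum_deriv (β k : ℝ) (x : ℝ) :
    deriv (vacuum β k) x =
      ![Complex.I * ((Real.sqrt (k / (2 * β)) : ℝ) : ℂ)
          * Complex.exp (-(((Real.sqrt (β * k / 2) : ℝ) : ℂ)) * (x : ℂ) ^ 2 / 2)
        + Complex.I * ((Real.sqrt (k / (2 * β)) : ℝ) : ℂ) * (x : ℂ)
          * (-(((Real.sqrt (β * k / 2) : ℝ) : ℂ)) * (x : ℂ)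
            * Complex.exp (-(((Real.sqrt (β * k / 2) : ℝ) : ℂ)) * (x : ℂ) ^ 2 / 2)),
        -(((Real.sqrt (β * k / 2) : ℝ) : ℂ)) * (x : ℂ)
          * Complex.exp (-(((Real.sqrt (β * k / 2) : ℝ) : ℂ)) * (x : ℂ) ^ 2 / 2)] := by
  set a : ℂ := ((Real.sqrt (β * k / 2) : ℝ) : ℂ) with ha
  set c : ℂ := ((Real.sqrt (k / (2 * β)) : ℝ) : ℂ) with hc
  have hx : HasDerivAt (fun x : ℝ => (x : ℂ)) 1 x := by
    simpa using (hasDerivAt_id x).ofReal_comp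
  have h2 : HasDerivAt (fun x : ℝ => (x : ℂ) ^ 2) (2 * (x : ℂ)) x := by
    have := hx.mul hx
    convert this using 1
    · rfl
    · funext y; simp only [Pi.mul_apply]; ring
    · ring
  have hE : HasDerivAt (fun x : ℝ => Complex.exp (-a * (x : ℂ) ^ 2 / 2))
      (-a * (x : ℂ) * Complex.exp (-a * (x : ℂ) ^ 2 / 2)) x := by
    have h1 : HasDerivAt (fun x : ℝ => -a * (x : ℂ) ^ 2 / 2) (-a * (x : ℂ)) x := by
      have := (h2.const_mul (-a)).div_const 2
      convert this using 1
      · rfl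
      ring
    convert h1.cexp using 1
    ring
  have h0 : HasDerivAt (fun x : ℝ => Complex.I * c * (x : ℂ)
      * Complex.exp (-a * (x : ℂ) ^ 2 / 2))
      (Complex.I * c * Complex.exp (-a * (x : ℂ) ^ 2 / 2)
        + Complex.I * c * (x : ℂ)
          * (-a * (x : ℂ) * Complex.exp (-a * (x : ℂ) ^ 2 / 2))) x := by
    have := (hx.const_mul (Complex.I * c)).mul hE
    convert this using 2
    · rfl
    · simp only [Pi.mul_apply]
    ring
  have hψ : HasDerivAt (vacuum β k)
      (![Complex.I * c * Complex.exp (-a * (x : ℂ) ^ 2 / 2)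
        + Complex.I * c * (x : ℂ)
          * (-a * (x : ℂ) * Complex.exp (-a * (x : ℂ) ^ 2 / 2)),
        -a * (x : ℂ) * Complex.exp (-a * (x : ℂ) ^ 2 / 2)]) x := by
    rw [hasDerivAt_pi]
    intro i
    fin_cases i
    · simp only [vacuum, Matrix.cons_val_zero, ← ha, ← hc]
      exact h0
    · simp only [vacuum, Matrix.cons_val_one, Matrix.head_cons, ← ha]
      exact hE
  exact hψ.deriv

/-- `ψ₀` is a vacuum state for the harmonic Lévy-Leblond Hamiltonian:
`bψ₀ = 0` and `H_LL ψ₀ = (ω/2) γ₊ ψ₀` with `ω = √(2k/β)`, i.e. `ψ₀` is a `γ₊`-eigenstate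
with `γ₊`-eigenvalue `ω/2`. -/
theorem vacuum_state (β k : ℝ) (hβ : 0 < β) (hk : 0 < k) :
    (∀ x : ℝ, lower β k (vacuum β k) x = 0) ∧
    (∀ x : ℝ, HLL β k (vacuum β k) x
      = ((Real.sqrt (2 * k / β) / 2 : ℝ) : ℂ) • γp.mulVec (vacuum β k x)) := by
  have hca : Real.sqrt (k / (2 * β)) * Real.sqrt (β * k / 2) = k / 2 := by
    rw [← Real.sqrt_mul (by positivity)]
    rw [show k / (2 * β) * (β * k / 2) = (k / 2) ^ 2 by field_simp]
    exact Real.sqrt_sq (by positivity)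
  have hbc : β * Real.sqrt (k / (2 * β)) = Real.sqrt (β * k / 2) := by
    rw [show β = Real.sqrt (β ^ 2) from (Real.sqrt_sq hβ.le).symm,
      ← Real.sqrt_mul (by positivity)]
    congr 1
    field_simp
    rw [Real.sq_sqrt (by positivity)]
  have hω : Real.sqrt (2 * k / β) / 2 = Real.sqrt (k / (2 * β)) := by
    rw [show 2 * k / β = 2 ^ 2 * (k / (2 * β)) by field_simp,
      Real.sqrt_mul (by positivity), Real.sqrt_sq (by norm_num)]
    ring
  -- complex versions
  have hca' : ((Real.sqrt (k / (2 * β)) : ℝ) : ℂ) * ((Real.sqrt (β * k / 2) : ℝ) : ℂ)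
      = (k : ℂ) / 2 := by exact_mod_cast congrArg Complex.ofReal hca
  have hbc' : (β : ℂ) * ((Real.sqrt (k / (2 * β)) : ℝ) : ℂ)
      = ((Real.sqrt (β * k / 2) : ℝ) : ℂ) := by exact_mod_cast congrArg Complex.ofReal hbc
  constructor
  · intro x
    rw [lower, vacuum_deriv]
    simp only [vacuum, γp_mulVec]
    funext i
    fin_cases i
    · simp only [Fin.zero_eta, Fin.mk_one, Pi.add_apply, Pi.sub_apply, Pi.smul_apply, Pi.zero_apply, smul_eq_mul,
        Matrix.cons_val_zero, Matrix.cons_val_one, Matrix.head_cons]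
      push_cast
      ring
    · simp only [Fin.zero_eta, Fin.mk_one, Pi.add_apply, Pi.sub_apply, Pi.smul_apply, Pi.zero_apply, smul_eq_mul,
        Matrix.cons_val_zero, Matrix.cons_val_one, Matrix.head_cons]
      push_cast
      ring
  · intro x
    rw [HLL, vacuum_deriv, hω]
    simp only [vacuum, γp_mulVec, γm_mulVec, γ1_mulVec]
    funext i
    fin_cases i
    · simp only [Fin.zero_eta, Fin.mk_one, Pi.add_apply, Pi.sub_apply, Pi.smul_apply, smul_eq_mul,
        Matrix.cons_val_zero, Matrix.cons_val_one, Matrix.head_cons]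
      push_cast
      linear_combination (((Real.sqrt (k / (2 * β)) : ℝ) : ℂ)
          * ((Real.sqrt (β * k / 2) : ℝ) : ℂ) * (x : ℂ) ^ 2
          * Complex.exp (-(((Real.sqrt (β * k / 2) : ℝ) : ℂ)) * (x : ℂ) ^ 2 / 2)
        - ((Real.sqrt (k / (2 * β)) : ℝ) : ℂ)
          * Complex.exp (-(((Real.sqrt (β * k / 2) : ℝ) : ℂ)) * (x : ℂ) ^ 2 / 2))
          * Complex.I_sq
        - ((x : ℂ) ^ 2
          * Complex.exp (-(((Real.sqrt (β * k / 2) : ℝ) : ℂ)) * (x : ℂ) ^ 2 / 2)) * hca'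
    · simp only [Fin.zero_eta, Fin.mk_one, Pi.add_apply, Pi.sub_apply, Pi.smul_apply, smul_eq_mul,
        Matrix.cons_val_zero, Matrix.cons_val_one, Matrix.head_cons]
      push_cast
      linear_combination (Complex.I * (x : ℂ)
          * Complex.exp (-(((Real.sqrt (β * k / 2) : ℝ) : ℂ)) * (x : ℂ) ^ 2 / 2)) * hbc'



end
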